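/- A subshift Σ is chain-mixing if and only if for every pair of words u, v in L(Σ) with |u| = |v| there exists k ∈ ℕ such that for every n > k there exists a chain of length n from u to v in L(Σ). -/

import Mathlib

/-! Common definitions: labelled graphs, walks, follower sets, the linking
relation, subshifts over `ℤ → A`, chains, and attractors. -/

structure LGraph (A : Type) where
  V : Type
  E : Type
  [finV : Finite V]
  [finE : Finite E]
  s : E → V
  t : E → V
  lab : E → A

attribute [instance] LGraph.finV LGraph.finE

namespace LGraph

variable {A : Type}

/-- `Walk G u v es` : the list of edges `es` forms a walk from `u` to `v`. -/
inductive Walk (G : LGraph A) : G.V → G.V → List G.E → Prop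
  | nil (v : G.V) : Walk G v v []
  | cons {w : G.V} {es : List G.E} (e : G.E) (h : Walk G (G.t e) w es) :
      Walk G (G.s e) w (e :: es)

/-- There is an edge from `u` to `v`. -/
def EdgeRel (G : LGraph A) (u v : G.V) : Prop := ∃ e : G.E, G.s e = u ∧ G.t e = v

/-- `v` is reachable from `u` by a directed walk. -/
def Reach (G : LGraph A) : G.V → G.V → Prop := Relation.ReflTransGen G.EdgeRel

/-- `u` and `v` lie in the same strongly connected component. -/
def SameComp (G : LGraph A) (u v : G.V) : Prop := G.Reach u v ∧ G.Reach v u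

/-- The number of strongly connected components of `G`. -/
noncomputable def numComponents (G : LGraph A) : ℕ :=
  Nat.card {K : Set G.V // ∃ v : G.V, K = {u : G.V | G.SameComp v u}}

/-- The restricted follower set of `v` : words labelling walks starting at `v`
that stay inside the strongly connected component of `v`. -/
def FollowR (G : LGraph A) (v : G.V) : Set (List A) :=
  {w | ∃ (u : G.V) (es : List G.E), G.Walk v u es ∧ es.map G.lab = w ∧
        ∀ e ∈ es, G.SameComp v (G.s e) ∧ G.SameComp v (G.t e)}

/-- Two vertices are linked iff their restricted follower sets have infinite
intersection. -/
def Linked (G : LGraph A) (u v : G.V) : Prop := (G.FollowR u ∩ G.FollowR v).Infinite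

/-- `≈` : the reflexive-transitive closure of the linked relation. -/
def Approx (G : LGraph A) : G.V → G.V → Prop := Relation.ReflTransGen G.Linked

/-- One step in the linking graph `G/≈` (lifted to `G`): either an edge of `G`
or a jump between linked vertices. -/
def GenStep (G : LGraph A) (u v : G.V) : Prop := G.EdgeRel u v ∨ G.Linked u v

/-- Reachability in the linking graph `G/≈`, expressed on vertices of `G`. -/
def GenReach (G : LGraph A) : G.V → G.V → Prop := Relation.ReflTransGen G.GenStep

/-- The language of `G` : words labelling finite walks in `G`. -/
def Lang (G : LGraph A) : Set (List A) :=
  {w | ∃ (u v : G.V) (es : List G.E), G.Walk u v es ∧ es.map G.lab = w}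

/-- `w` has a presentation in the subgraph of `G` induced by the vertex set `S`. -/
def PresIn (G : LGraph A) (S : Set G.V) (w : List A) : Prop :=
  ∃ (u v : G.V) (es : List G.E), G.Walk u v es ∧ es.map G.lab = w ∧
    u ∈ S ∧ v ∈ S ∧ ∀ e ∈ es, G.s e ∈ S ∧ G.t e ∈ S

/-- A presentation of the first `n` letters of `w`, with explicit vertex
sequence `v` and edge sequence `e`. -/
def PresFun (G : LGraph A) (n : ℕ) (w : ℕ → A) (v : ℕ → G.V) (e : ℕ → G.E) : Prop :=
  ∀ i < n, G.s (e i) = v i ∧ G.t (e i) = v (i + 1) ∧ G.lab (e i) = w i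

/-- `S` is a union of `≈`-equivalence classes, i.e. `S = π⁻¹(π(S))` for the
projection `π : G → G/≈`. -/
def SaturatedSet (G : LGraph A) (S : Set G.V) : Prop :=
  ∀ u v : G.V, G.Approx u v → (u ∈ S ↔ v ∈ S)

/-- No edge leaves `S` : together with saturation this says that the image of
`S` in `G/≈` is a terminal subgraph. -/
def ForwardClosed (G : LGraph A) (S : Set G.V) : Prop :=
  ∀ e : G.E, G.s e ∈ S → G.t e ∈ S

/-- Every vertex has an ingoing and an outgoing edge. -/
def Essential (G : LGraph A) : Prop :=
  ∀ v : G.V, (∃ e : G.E, G.t e = v) ∧ (∃ e : G.E, G.s e = v)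

/-- A biinfinite presentation of `x` (vertex sequence `v`, edge sequence `e`)
staying in the vertex set `S`. -/
def BiPresIn (G : LGraph A) (S : Set G.V) (x : ℤ → A) (v : ℤ → G.V) (e : ℤ → G.E) : Prop :=
  ∀ i : ℤ, G.s (e i) = v i ∧ G.t (e i) = v (i + 1) ∧ G.lab (e i) = x i ∧ v i ∈ S

/-- The subshift of biinfinite label sequences of biinfinite walks of `G`
staying in `S`. -/
def SigmaIn (G : LGraph A) (S : Set G.V) : Set (ℤ → A) :=
  {x | ∃ v e, G.BiPresIn S x v e}

/-- The sofic subshift `Σ(G)`. -/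
def Sigma' (G : LGraph A) : Set (ℤ → A) := G.SigmaIn Set.univ

/-- The linking graph `G/≈` is strongly connected. -/
def StronglyConnectedQuot (G : LGraph A) : Prop := ∀ u v : G.V, G.GenReach u v

/-- The linking graph `G/≈` is periodic : its vertices can be partitioned into
`n > 1` classes (indexed by `ZMod n`, each a union of `≈`-classes) so that every
edge advances the class index by one. -/
def PeriodicQuot (G : LGraph A) : Prop :=
  ∃ n : ℕ, 1 < n ∧ ∃ c : G.V → ZMod n,
    (∀ u v : G.V, G.Approx u v → c u = c v) ∧ ∀ e : G.E, c (G.t e) = c (G.s e) + 1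

/-- The label product `G * H`. -/
def labelProduct (G H : LGraph A) : LGraph A where
  V := G.V × H.V
  E := {p : G.E × H.E // G.lab p.1 = H.lab p.2}
  s := fun p => (G.s p.1.1, H.s p.1.2)
  t := fun p => (G.t p.1.1, H.t p.1.2)
  lab := fun p => G.lab p.1.1

end LGraph

section Subshift

variable {A : Type}

/-- The shift map `σ`. -/
def shift (x : ℤ → A) : ℤ → A := fun i => x (i + 1)

open Classical in
/-- The metric `ρ(x,y) = 2^{-n}` where `n` is minimal with `x_n ≠ y_n` or
`x_{-n} ≠ y_{-n}` (and `ρ(x,x) = 0`). -/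
noncomputable def rho (x y : ℤ → A) : ℝ :=
  if x = y then 0
  else (2 : ℝ) ^ (-((sInf {n : ℕ | ∃ i : ℤ, i.natAbs = n ∧ x i ≠ y i} : ℕ) : ℤ))

/-- Closedness with respect to the metric `rho`. -/
def RhoClosed (Sig : Set (ℤ → A)) : Prop :=
  ∀ x : ℤ → A, (∀ ε : ℝ, 0 < ε → ∃ y ∈ Sig, rho x y < ε) → x ∈ Sig

/-- A subshift : a closed, strongly shift-invariant subset of `A^ℤ`. -/
def IsSubshift (Sig : Set (ℤ → A)) : Prop :=
  RhoClosed Sig ∧ shift '' Sig = Sig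

/-- The language of the subshift `Sig` : all finite factors of its points. -/
def lang (Sig : Set (ℤ → A)) : Set (List A) :=
  {w | ∃ x ∈ Sig, ∃ k : ℤ, ∀ (i : ℕ) (h : i < w.length), w.get ⟨i, h⟩ = x (k + i)}

/-- The central factor `x_{[-l,l]}` of a biinfinite word. -/
def central (x : ℤ → A) (l : ℕ) : List A :=
  (List.range (2 * l + 1)).map fun i => x ((i : ℤ) - (l : ℤ))

/-- `ChainWord L u v n w` : `w` is a chain of length `n` from `u` to `v` in the
language `L` : `|w| = n + |u|`, `w` has prefix `u` and suffix `v`, and every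
factor of `w` of length at most `|u|` belongs to `L`. -/
def ChainWord (L : Set (List A)) (u v : List A) (n : ℕ) (w : List A) : Prop :=
  u.length = v.length ∧ w.length = n + u.length ∧
  w.take u.length = u ∧ w.drop n = v ∧
  ∀ z : List A, z <:+: w → z.length ≤ u.length → z ∈ L

/-- An `ε`-chain of length `n > 0` from `x` to `y` inside `Sig`. -/
def EpsChain (Sig : Set (ℤ → A)) (ε : ℝ) (n : ℕ) (x y : ℤ → A) : Prop :=
  0 < n ∧ ∃ z : ℕ → ℤ → A, z 0 = x ∧ z n = y ∧ (∀ i ≤ n, z i ∈ Sig) ∧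
    ∀ i < n, rho (shift (z i)) (z (i + 1)) < ε

/-- The chain relation of `(Sig, σ)`. -/
def ChainRel (Sig : Set (ℤ → A)) (x y : ℤ → A) : Prop :=
  ∀ ε : ℝ, 0 < ε → ∃ n : ℕ, EpsChain Sig ε n x y

/-- Chain-transitivity. -/
def ChainTransitive (Sig : Set (ℤ → A)) : Prop :=
  ∀ x ∈ Sig, ∀ y ∈ Sig, ChainRel Sig x y

/-- Chain-mixing. -/
def ChainMixing (Sig : Set (ℤ → A)) : Prop :=
  ∀ x ∈ Sig, ∀ y ∈ Sig, ∀ ε : ℝ, 0 < ε → ∃ k : ℕ, ∀ n, k < n → EpsChain Sig ε n x y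

/-- Distance from a point to a set, with respect to `rho`. -/
noncomputable def distTo (x : ℤ → A) (Y : Set (ℤ → A)) : ℝ := sInf (rho x '' Y)

/-- `Y` is an attractor of the dynamical system `(Sig, σ)`. -/
def IsAttractor (Sig Y : Set (ℤ → A)) : Prop :=
  Y.Nonempty ∧ Y ⊆ Sig ∧ RhoClosed Y ∧ shift '' Y = Y ∧
  (∀ ε : ℝ, 0 < ε → ∃ δ : ℝ, 0 < δ ∧ ∀ x ∈ Sig, distTo x Y < δ →
    ∀ n : ℕ, 0 < n → distTo (shift^[n] x) Y < ε) ∧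
  (∃ δ : ℝ, 0 < δ ∧ ∀ x ∈ Sig, distTo x Y < δ →
    Filter.Tendsto (fun n : ℕ => distTo (shift^[n] x) Y) Filter.atTop (nhds 0))

end Subshift
section MyHelpers

variable {A : Type}

lemma my_rho_lt_iff (x y : ℤ → A) (m : ℕ) :
    rho x y < 2 ^ (-(m : ℤ)) ↔ ∀ t : ℤ, t.natAbs ≤ m → x t = y t := by
  unfold rho
  by_cases hxy : x = y
  · simp [hxy, zpow_pos, (by norm_num : (0:ℝ) < 2)]
  · rw [if_neg hxy]
    have hne : ∃ i : ℤ, x i ≠ y i := by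
      by_contra hc
      push_neg at hc
      exact hxy (funext hc)
    obtain ⟨i0, hi0⟩ := hne
    have hSne : {n : ℕ | ∃ i : ℤ, i.natAbs = n ∧ x i ≠ y i}.Nonempty :=
      ⟨i0.natAbs, i0, rfl, hi0⟩
    have hmem := Nat.sInf_mem hSne
    set n0 := sInf {n : ℕ | ∃ i : ℤ, i.natAbs = n ∧ x i ≠ y i} with hn0
    have hpow : (2:ℝ) ^ (-(n0:ℤ)) < 2 ^ (-(m:ℤ)) ↔ m < n0 := by
      rw [zpow_lt_zpow_iff_right₀ (by norm_num : (1:ℝ) < 2)]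
      omega
    rw [hpow]
    constructor
    · intro hlt t ht
      by_contra hne'
      have : t.natAbs ∈ {n : ℕ | ∃ i : ℤ, i.natAbs = n ∧ x i ≠ y i} := ⟨t, rfl, hne'⟩
      have := Nat.sInf_le this
      omega
    · intro hag
      obtain ⟨i, hi, hne'⟩ := hmem
      by_contra hc
      exact hne' (hag i (by omega))

lemma my_shift_mem {Sig : Set (ℤ → A)} (h : shift '' Sig = Sig) {x : ℤ → A}
    (hx : x ∈ Sig) : shift x ∈ Sig := h ▸ ⟨x, hx, rfl⟩

lemma my_shift_iter_mem {Sig : Set (ℤ → A)} (h : shift '' Sig = Sig) {x : ℤ → A}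
    (hx : x ∈ Sig) (j : ℕ) : shift^[j] x ∈ Sig := by
  induction j with
  | zero => exact hx
  | succ j ih => rw [Function.iterate_succ_apply']; exact my_shift_mem h ih

lemma my_exists_shift_int {Sig : Set (ℤ → A)} (h : shift '' Sig = Sig) {x : ℤ → A}
    (hx : x ∈ Sig) (k : ℤ) : ∃ y ∈ Sig, ∀ i, y i = x (i + k) := by
  induction k using Int.induction_on with
  | zero => exact ⟨x, hx, fun i => by simp⟩
  | succ k ih =>
      obtain ⟨y, hy, hyk⟩ := ih
      refine ⟨shift y, my_shift_mem h hy, fun i => ?_⟩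
      show y (i + 1) = _
      rw [hyk]; ring_nf
  | pred k ih =>
      obtain ⟨y, hy, hyk⟩ := ih
      have : y ∈ shift '' Sig := h.symm ▸ hy
      obtain ⟨y', hy', hyy⟩ := this
      refine ⟨y', hy', fun i => ?_⟩
      have h1 : y' i = y (i - 1) := by
        rw [← hyy]; show y' i = y' (i - 1 + 1); congr 1; ring
      rw [h1, hyk]; ring_nf

lemma my_mem_lang_elim {Sig : Set (ℤ → A)} (h : shift '' Sig = Sig) {w : List A}
    (hw : w ∈ lang Sig) :
    ∃ z ∈ Sig, ∀ (i : ℕ) (hi : i < w.length), w.get ⟨i, hi⟩ = z i := by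
  obtain ⟨x, hx, k, hk⟩ := hw
  obtain ⟨z, hz, hzk⟩ := my_exists_shift_int h hx k
  refine ⟨z, hz, fun i hi => ?_⟩
  rw [hk i hi, hzk]; ring_nf

lemma my_coe_list (l : List ℕ) :
    (Bind.bind l (fun a : ℕ => (Pure.pure ((a : ℕ) : ℤ) : List ℤ)) : List ℤ)
      = l.map (fun a : ℕ => (a : ℤ)) := by
  induction l with
  | nil => rfl
  | cons a l ih =>
      rw [List.map_cons, ← ih]
      rfl

lemma my_central_length (x : ℤ → A) (m : ℕ) : (central x m).length = 2 * m + 1 := by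
  unfold central
  rw [my_coe_list, List.length_map, List.length_map, List.length_range]

lemma my_central_get (x : ℤ → A) (m : ℕ) (i : ℕ) (hi : i < (central x m).length) :
    (central x m).get ⟨i, hi⟩ = x ((i : ℤ) - m) := by
  have hi2 : i < 2 * m + 1 := by rwa [my_central_length] at hi
  unfold central at hi ⊢
  rw [List.get_eq_getElem]
  simp only [my_coe_list, List.getElem_map, List.getElem_range]

lemma my_central_mem_lang {Sig : Set (ℤ → A)} {x : ℤ → A} (hx : x ∈ Sig) (m : ℕ) :
    central x m ∈ lang Sig := by
  refine ⟨x, hx, -(m : ℤ), fun i hi => ?_⟩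
  rw [my_central_get x m i hi]
  ring_nf

end MyHelpers

theorem stmt6 {A : Type} (Sig : Set (ℤ → A)) (hS : IsSubshift Sig) :
    ChainMixing Sig ↔
      ∀ u ∈ lang Sig, ∀ v ∈ lang Sig, u.length = v.length →
        ∃ k : ℕ, ∀ n : ℕ, k < n → ∃ w : List A, ChainWord (lang Sig) u v n w := by
  obtain ⟨hcl, hsh⟩ := hS
  constructor
  · intro hcm u hu v hv hlen
    classical
    obtain ⟨x, hx, hxu⟩ := my_mem_lang_elim hsh hu
    obtain ⟨y, hy, hyv⟩ := my_mem_lang_elim hsh hv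
    have hε : (0:ℝ) < 2 ^ (-(u.length : ℤ)) := by positivity
    obtain ⟨k, hk⟩ := hcm x hx y hy _ hε
    refine ⟨k, fun n hn => ?_⟩
    obtain ⟨hnpos, z, hz0, hzn, hmem, hstep⟩ := hk n hn
    set m := u.length with hm
    set Z : ℕ → ℤ → A := fun i => if i ≤ n then z i else shift^[i - n] (z n) with hZdef
    have hZle : ∀ i, i ≤ n → Z i = z i := fun i hi => by simp [hZdef, hi]
    have hZge : ∀ i, n ≤ i → Z i = shift^[i - n] (z n) := by
      intro i hi
      by_cases h : i ≤ n
      · have hin : i = n := le_antisymm h hi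
        subst hin
        simp [hZdef]
      · simp [hZdef, h]
    have hZmem : ∀ i, Z i ∈ Sig := by
      intro i
      by_cases h : i ≤ n
      · rw [hZle i h]; exact hmem i h
      · rw [hZge i (by omega)]; exact my_shift_iter_mem hsh (hmem n le_rfl) _
    have hstepZ : ∀ (i : ℕ) (t : ℤ), t.natAbs ≤ m → Z i (t + 1) = Z (i + 1) t := by
      intro i t ht
      by_cases h : i < n
      · have h2 := (my_rho_lt_iff (shift (z i)) (z (i + 1)) m).mp (hstep i h) t ht
        rw [hZle i h.le, hZle (i + 1) h]
        exact h2
      · push_neg at h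
        rw [hZge i h, hZge (i + 1) (by omega)]
        rw [show i + 1 - n = (i - n) + 1 by omega, Function.iterate_succ_apply']
        rfl
    have hkey : ∀ s : ℕ, s ≤ m → ∀ i, Z i (s : ℤ) = Z (i + s) 0 := by
      intro s
      induction s with
      | zero => intro _ i; simp
      | succ s ih =>
          intro hs i
          have h1 : Z i ((s : ℤ) + 1) = Z (i + 1) (s : ℤ) :=
            hstepZ i s (by simp; omega)
          have h2 := ih (by omega) (i + 1)
          rw [show ((s + 1 : ℕ) : ℤ) = (s : ℤ) + 1 by push_cast; ring, h1, h2,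
            show i + 1 + s = i + (s + 1) by omega]
    set w : List A := (List.range (n + m)).map (fun j => Z j 0) with hwdef
    have hwlen : w.length = n + m := by
      rw [hwdef, List.length_map, List.length_range]
    have hwget : ∀ (j : ℕ) (hj : j < w.length), w[j] = Z j 0 := by
      intro j hj
      simp [hwdef]
    refine ⟨w, hlen, hwlen, ?_, ?_, ?_⟩
    · -- prefix
      apply List.ext_getElem
      · rw [List.length_take, hwlen]; omega
      · intro i h1 h2
        have him : i < m := h2
        have hiw : i < w.length := by omega
        rw [List.getElem_take, hwget i hiw]
        have hk1 : Z 0 (i : ℤ) = Z (0 + i) 0 := hkey i him.le 0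
        rw [zero_add] at hk1
        rw [← hk1, hZle 0 (by omega), hz0]
        have h3 := hxu i h2
        rw [List.get_eq_getElem] at h3
        exact h3.symm
    · -- suffix
      apply List.ext_getElem
      · rw [List.length_drop, hwlen]; omega
      · intro t h1 h2
        have htm : t < m := by omega
        have hnt : n + t < w.length := by omega
        rw [List.getElem_drop, hwget (n + t) hnt]
        have hk1 : Z n (t : ℤ) = Z (n + t) 0 := hkey t htm.le n
        rw [← hk1, hZle n le_rfl, hzn]
        have h3 := hyv t h2
        rw [List.get_eq_getElem] at h3
        exact h3.symm
    · -- factors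
      intro zz hinf hlzz
      obtain ⟨s, t, hst⟩ := hinf
      have hslen : s.length + zz.length + t.length = w.length := by
        rw [← hst]; simp; omega
      refine ⟨Z s.length, hZmem _, 0, fun i hi => ?_⟩
      have hidx : i + s.length < w.length := by omega
      have e1 : zz[i]'hi = (s ++ zz)[i + s.length]'(by simp; omega) :=
        List.getElem_append_right' s hi
      have e2 : (s ++ zz)[i + s.length]'(by simp; omega)
          = ((s ++ zz) ++ t)[i + s.length]'(by simp; omega) :=
        List.getElem_append_left' (by simp; omega) t
      have e3 : ((s ++ zz) ++ t)[i + s.length]'(by rw [hst]; exact hidx)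
          = w[i + s.length]'hidx := List.getElem_of_eq hst _
      rw [List.get_eq_getElem, e1, e2, e3, hwget _ hidx]
      have hk1 : Z s.length (i : ℤ) = Z (s.length + i) 0 := hkey i (by omega) s.length
      rw [show i + s.length = s.length + i by omega, ← hk1]
      norm_num
  · intro h x hx y hy ε hε
    classical
    obtain ⟨m0, hm0⟩ : ∃ m0 : ℕ, (2:ℝ) ^ (-(m0:ℤ)) < ε := by
      obtain ⟨n, hn⟩ := exists_pow_lt_of_lt_one hε (by norm_num : (1:ℝ)/2 < 1)
      refine ⟨n, ?_⟩
      have he : (2:ℝ) ^ (-(n:ℤ)) = (1/2) ^ n := by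
        rw [zpow_neg, zpow_natCast, one_div, inv_pow]
      rwa [he]
    set m := m0 + 1 with hmdef
    have hul := my_central_length x m
    have hvl := my_central_length y m
    obtain ⟨k, hk⟩ := h (central x m) (my_central_mem_lang hx m)
      (central y m) (my_central_mem_lang hy m) (by rw [hul, hvl])
    refine ⟨k, fun n hn => ?_⟩
    obtain ⟨w, _, hwlen, hpre, hsuf, hfac⟩ := hk n hn
    rw [hul] at hwlen
    have hnpos : 0 < n := by omega
    have hmid : ∀ i : ℕ, i ≤ n → ∃ p ∈ Sig, ∀ (s : ℕ), s < 2*m+1 →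
        ∀ (hidx : i + s < w.length), p ((s:ℤ) - m) = w[i + s]'hidx := by
      intro i hin
      have hfl : ((w.drop i).take (2*m+1)).length = 2*m+1 := by
        rw [List.length_take, List.length_drop]; omega
      have hinf : (w.drop i).take (2*m+1) <:+: w :=
        (List.take_prefix _ _).isInfix.trans (List.drop_suffix _ _).isInfix
      have hwrd := hfac _ hinf (le_of_eq (by rw [hfl, hul]))
      obtain ⟨q, hq, hqe⟩ := my_mem_lang_elim hsh hwrd
      obtain ⟨p, hp, hpe⟩ := my_exists_shift_int hsh hq (m : ℤ)
      refine ⟨p, hp, fun s hs hidx => ?_⟩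
      have h1 : p ((s:ℤ) - m) = q s := by rw [hpe]; congr 1; ring
      have h2 := hqe s (by rw [hfl]; exact hs)
      rw [List.get_eq_getElem] at h2
      rw [h1, ← h2]
      simp
    choose P hPmem hPval using hmid
    set Z : ℕ → ℤ → A := fun i =>
      if hin : i ≤ n then (if i = 0 then x else if i = n then y else P i hin) else x
      with hZdef
    have hZ0 : Z 0 = x := by simp [hZdef, Nat.zero_le n]
    have hZn : Z n = y := by simp [hZdef, hnpos.ne']
    have hZmem : ∀ i, Z i ∈ Sig := by
      intro i
      simp only [hZdef]
      by_cases hin : i ≤ n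
      · rw [dif_pos hin]
        by_cases h0 : i = 0
        · rw [if_pos h0]; exact hx
        · rw [if_neg h0]
          by_cases hn' : i = n
          · rw [if_pos hn']; exact hy
          · rw [if_neg hn']; exact hPmem _ _
      · rw [dif_neg hin]; exact hx
    have hZval : ∀ (i : ℕ), i ≤ n → ∀ (s : ℕ), s < 2*m+1 →
        ∀ (hidx : i + s < w.length), Z i ((s:ℤ) - m) = w[i + s]'hidx := by
      intro i hin s hs hidx
      by_cases h0 : i = 0
      · subst h0
        rw [hZ0]
        have e1 := my_central_get x m s (by rw [hul]; exact hs)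
        rw [List.get_eq_getElem] at e1
        have e2 : (central x m)[s]'(by rw [hul]; exact hs)
            = (w.take (central x m).length)[s]'(by rw [List.length_take, hul]; omega) :=
          List.getElem_of_eq hpre.symm _
        rw [← e1, e2]
        simp
      · by_cases hn' : i = n
        · subst hn'
          rw [hZn]
          have e1 := my_central_get y m s (by rw [hvl]; exact hs)
          rw [List.get_eq_getElem] at e1
          have e2 : (central y m)[s]'(by rw [hvl]; exact hs)
              = (w.drop i)[s]'(by rw [hsuf, hvl]; exact hs) :=
            List.getElem_of_eq hsuf.symm _
          rw [← e1, e2]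
          simp
        · have hZi : Z i = P i hin := by
            rw [hZdef]
            simp only [hin, dif_pos, if_neg h0, if_neg hn']
          rw [hZi]
          exact hPval i hin s hs hidx
    refine ⟨hnpos, Z, hZ0, hZn, fun i _ => hZmem i, fun i hi => ?_⟩
    refine lt_trans ?_ hm0
    rw [my_rho_lt_iff]
    intro t ht
    have htb : -(m0:ℤ) ≤ t ∧ t ≤ (m0:ℤ) := by
      constructor <;> omega
    set s1 := (t + 1 + (m:ℤ)).toNat with hs1def
    set s2 := (t + (m:ℤ)).toNat with hs2def
    have hs1v : (s1 : ℤ) = t + 1 + m := by omega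
    have hs2v : (s2 : ℤ) = t + m := by omega
    have hs1lt : s1 < 2*m+1 := by omega
    have hs2lt : s2 < 2*m+1 := by omega
    have hidx1 : i + s1 < w.length := by omega
    have hidx2 : (i+1) + s2 < w.length := by omega
    have hieq : (i+1) + s2 = i + s1 := by omega
    have e1 : Z i (t + 1) = w[i + s1]'hidx1 := by
      have := hZval i (by omega) s1 hs1lt hidx1
      rw [show ((s1:ℤ) - m) = t + 1 by omega] at this
      exact this
    have e2 : Z (i+1) t = w[(i+1) + s2]'hidx2 := by
      have := hZval (i+1) (by omega) s2 hs2lt hidx2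
      rw [show ((s2:ℤ) - m) = t by omega] at this
      exact this
    simp only [hieq] at e2
    show Z i (t + 1) = Z (i + 1) t
    rw [e1, e2]
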